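/- Let r, s > 0 be real numbers. Then for every u ∈ C_c^∞(ℝ,ℂ): ⟨u, (r p² + s q²)² u⟩ ≥ (min{r,s})² ⟨u, (p² + q²)² u⟩ − 2( rs − (min{r,s})² ) ‖u‖², and ⟨u, (r p² + s q²)² u⟩ ≤ (max{r,s})² ⟨u, (p² + q²)² u⟩ + 2( (max{r,s})² − rs ) ‖u‖². -/

import Mathlib

open MeasureTheory Complex
open scoped ComplexOrder

noncomputable section

/-- Operators acting on complex-valued functions on `ℝ`. -/
abbrev Op : Type := (ℝ → ℂ) → (ℝ → ℂ)

/-- The momentum operator `(p u)(x) = -i u'(x)`. -/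
def pOp : Op := fun u x => -Complex.I * deriv u x

/-- The position operator `(q u)(x) = x * u(x)`. -/
def qOp : Op := fun u x => (x : ℂ) * u x

/-- Multiplication operator by a real-valued function. -/
def mulOp (f : ℝ → ℝ) : Op := fun u x => (f x : ℂ) * u x

/-- Commutator of two operators. -/
def opComm (A B : Op) : Op := fun u => A (B u) - B (A u)

/-- Anticommutator of two operators. -/
def opACom (A B : Op) : Op := fun u => A (B u) + B (A u)

/-- The `L²(ℝ,ℂ)` inner product, antilinear in the first argument. -/
def ip (u v : ℝ → ℂ) : ℂ := ∫ x : ℝ, (starRingEnd ℂ) (u x) * v x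

/-- `u ∈ C_c^∞(ℝ,ℂ)`: smooth and compactly supported. -/
def IsTest (u : ℝ → ℂ) : Prop := ContDiff ℝ (⊤ : ℕ∞) u ∧ HasCompactSupport u

/-- `r p² + s q²`. -/
def Yop (r s : ℝ) : Op := fun v => (r : ℂ) • pOp (pOp v) + (s : ℂ) • qOp (qOp v)

/-- `p² + q²`. -/
def Nop : Op := fun v => pOp (pOp v) + qOp (qOp v)

namespace Hlp
variable {u v f g : ℝ → ℂ}
lemma tcont {u : ℝ → ℂ} (hu : IsTest u) : Continuous u := hu.1.continuous
lemma tdiff {u : ℝ → ℂ} (hu : IsTest u) : Differentiable ℝ u := hu.1.differentiable (by simp)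

lemma tderiv {u : ℝ → ℂ} (hu : IsTest u) : IsTest (deriv u) :=
  ⟨(contDiff_infty_iff_deriv.mp hu.1).2, hu.2.deriv⟩

lemma tp {u : ℝ → ℂ} (hu : IsTest u) : IsTest (pOp u) := by
  refine ⟨contDiff_const.mul (tderiv hu).1, ?_⟩
  exact (tderiv hu).2.mul_left

lemma tq {u : ℝ → ℂ} (hu : IsTest u) : IsTest (qOp u) := by
  refine ⟨(Complex.ofRealCLM.contDiff).mul hu.1, hu.2.mul_left⟩

lemma mul_int (hc : Continuous u) (hcs : HasCompactSupport u) (hf : Continuous f) :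
    Integrable (fun x => u x * f x) :=
  (hc.mul hf).integrable_of_hasCompactSupport hcs.mul_right

lemma conj_cs (hu : IsTest u) : HasCompactSupport fun x => (starRingEnd ℂ) (u x) :=
  hu.2.comp_left (map_zero _)

lemma ip_int (hu : IsTest u) (hf : Continuous f) :
    Integrable (fun x => (starRingEnd ℂ) (u x) * f x) :=
  mul_int (continuous_conj.comp (tcont hu)) (conj_cs hu) hf

lemma ip_comb (hu : IsTest u) (hf : Continuous f) (hg : Continuous g) (c d : ℂ) :
    ip u (c • f + d • g) = c * ip u f + d * ip u g := by
  unfold ip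
  have h1 : Integrable (fun x => c * ((starRingEnd ℂ) (u x) * f x)) :=
    (ip_int hu hf).const_mul c
  have h2 : Integrable (fun x => d * ((starRingEnd ℂ) (u x) * g x)) :=
    (ip_int hu hg).const_mul d
  calc (∫ x : ℝ, (starRingEnd ℂ) (u x) * (c • f + d • g) x)
      = ∫ x : ℝ, (c * ((starRingEnd ℂ) (u x) * f x) + d * ((starRingEnd ℂ) (u x) * g x)) := by
        congr 1; funext x; simp [Pi.add_apply, Pi.smul_apply, smul_eq_mul]; ring
    _ = _ := by
        rw [integral_add h1 h2, integral_const_mul, integral_const_mul]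

lemma ip_q_symm : ip (qOp u) v = ip u (qOp v) := by
  unfold ip qOp
  congr 1; funext x
  simp [map_mul, Complex.conj_ofReal]; ring

lemma ip_p_symm (hu : IsTest u) (hv : IsTest v) : ip (pOp u) v = ip u (pOp v) := by
  have key : ∫ x : ℝ, (starRingEnd ℂ) (u x) * deriv v x
      = - ∫ x : ℝ, (starRingEnd ℂ) (deriv u x) * v x := by
    apply integral_mul_deriv_eq_deriv_mul_of_integrable
      (u := fun x => (starRingEnd ℂ) (u x)) (u' := fun x => (starRingEnd ℂ) (deriv u x))
      (v := v) (v' := deriv v)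
    · intro x _; exact (((tdiff hu) x).hasDerivAt).star
    · intro x _; exact ((tdiff hv) x).hasDerivAt
    · exact ip_int hu (tcont (tderiv hv))
    · exact mul_int (continuous_conj.comp (tcont (tderiv hu))) (conj_cs (tderiv hu)) (tcont hv)
    · exact ip_int hu (tcont hv)
  unfold ip pOp
  calc (∫ x : ℝ, (starRingEnd ℂ) (-Complex.I * deriv u x) * v x)
      = ∫ x : ℝ, Complex.I * ((starRingEnd ℂ) (deriv u x) * v x) := by
        congr 1; funext x; simp; ring
    _ = Complex.I * ∫ x : ℝ, (starRingEnd ℂ) (deriv u x) * v x := integral_const_mul _ _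
    _ = (-Complex.I) * ∫ x : ℝ, (starRingEnd ℂ) (u x) * deriv v x := by
        rw [key]; ring
    _ = ∫ x : ℝ, (-Complex.I) * ((starRingEnd ℂ) (u x) * deriv v x) :=
        (integral_const_mul _ _).symm
    _ = _ := by congr 1; funext x; ring

lemma pOp_q_apply (hv : IsTest v) (x : ℝ) :
    pOp (qOp v) x = (x : ℂ) * pOp v x + (-Complex.I) * v x := by
  have h1 : HasDerivAt (fun y : ℝ => ((y : ℂ)) * v y) ((1 : ℂ) * v x + (x : ℂ) * deriv v x) x :=
    HasDerivAt.mul (by simpa using (hasDerivAt_id x).ofReal_comp)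
      (((tdiff hv) x).hasDerivAt)
  show -Complex.I * deriv (fun y : ℝ => ((y : ℂ)) * v y) x = _
  rw [h1.deriv]
  simp [pOp]; ring

lemma pOp_comb (hf : IsTest f) (hg : IsTest g) (c d : ℂ) :
    pOp (c • f + d • g) = c • pOp f + d • pOp g := by
  funext x
  have h : HasDerivAt (fun y => c • f y + d • g y) (c • deriv f x + d • deriv g x) x :=
    ((((tdiff hf) x).hasDerivAt).const_smul c).add ((((tdiff hg) x).hasDerivAt).const_smul d)
  show -Complex.I * deriv (fun y => c • f y + d • g y) x = _
  rw [h.deriv]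
  simp [pOp, smul_eq_mul]; ring

lemma qOp_comb (c d : ℂ) : qOp (c • f + d • g) = c • qOp f + d • qOp g := by
  funext x; simp [qOp, smul_eq_mul]; ring

lemma tcomb {f g : ℝ → ℂ} (hf : IsTest f) (hg : IsTest g) (c d : ℂ) : IsTest (c • f + d • g) :=
  ⟨(hf.1.const_smul c).add (hg.1.const_smul d), (hf.2.smul_left).add (hg.2.smul_left)⟩

lemma ip_self_real (u : ℝ → ℂ) : ∃ t : ℝ, 0 ≤ t ∧ ip u u = (t : ℂ) := by
  refine ⟨∫ x : ℝ, Complex.normSq (u x), integral_nonneg fun x => Complex.normSq_nonneg _, ?_⟩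
  unfold ip
  calc (∫ x : ℝ, (starRingEnd ℂ) (u x) * u x)
      = ∫ x : ℝ, ((Complex.normSq (u x) : ℝ) : ℂ) := by
        congr 1; funext x; rw [← Complex.normSq_eq_conj_mul_self]
    _ = _ := integral_ofReal

end Hlp

namespace Hlp2
open Hlp

variable {u : ℝ → ℂ}

lemma ip_conj (a b : ℝ → ℂ) : ip a b = (starRingEnd ℂ) (ip b a) := by
  unfold ip
  rw [← integral_conj]
  congr 1; funext x; simp [map_mul]; ring

lemma pOp_qq (hu : IsTest u) :
    pOp (qOp (qOp u)) = (1:ℂ) • qOp (qOp (pOp u)) + (-2*Complex.I) • qOp u := by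
  funext x
  rw [show pOp (qOp (qOp u)) x = (x:ℂ) * pOp (qOp u) x + (-Complex.I) * qOp u x from
    pOp_q_apply (tq hu) x, pOp_q_apply hu x]
  simp [qOp, Pi.add_apply, smul_eq_mul]
  try ring

lemma pOp_q (hu : IsTest u) :
    pOp (qOp u) = (1:ℂ) • qOp (pOp u) + (-Complex.I) • u := by
  funext x
  rw [pOp_q_apply hu x]
  simp [qOp, Pi.add_apply, smul_eq_mul]
  try ring

lemma ip_Y2 (hu : IsTest u) (r s : ℝ) :
    ip u (Yop r s (Yop r s u))
      = (r:ℂ)*r * ip u (pOp (pOp (pOp (pOp u))))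
        + (r:ℂ)*s * ip u (pOp (pOp (qOp (qOp u))))
        + (s:ℂ)*r * ip u (qOp (qOp (pOp (pOp u))))
        + (s:ℂ)*s * ip u (qOp (qOp (qOp (qOp u)))) := by
  have hAu : IsTest (pOp (pOp u)) := tp (tp hu)
  have hBu : IsTest (qOp (qOp u)) := tq (tq hu)
  have c1 : Continuous (pOp (pOp (pOp (pOp u)))) := tcont (tp (tp hAu))
  have c2 : Continuous (pOp (pOp (qOp (qOp u)))) := tcont (tp (tp hBu))
  have c3 : Continuous (qOp (qOp (pOp (pOp u)))) := tcont (tq (tq hAu))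
  have c4 : Continuous (qOp (qOp (qOp (qOp u)))) := tcont (tq (tq hBu))
  show ip u ((r:ℂ) • pOp (pOp (Yop r s u)) + (s:ℂ) • qOp (qOp (Yop r s u))) = _
  rw [show Yop r s u = (r:ℂ) • (pOp (pOp u)) + (s:ℂ) • (qOp (qOp u)) from rfl]
  rw [pOp_comb hAu hBu, pOp_comb (tp hAu) (tp hBu), qOp_comb, qOp_comb]
  have d1 : Continuous ((r:ℂ) • pOp (pOp (pOp (pOp u))) + (s:ℂ) • pOp (pOp (qOp (qOp u)))) :=
    (c1.const_smul ((r:ℂ))).add (c2.const_smul ((s:ℂ)))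
  have d2 : Continuous ((r:ℂ) • qOp (qOp (pOp (pOp u))) + (s:ℂ) • qOp (qOp (qOp (qOp u)))) :=
    (c3.const_smul ((r:ℂ))).add (c4.const_smul ((s:ℂ)))
  rw [ip_comb hu d1 d2]
  rw [ip_comb hu c1 c2, ip_comb hu c3 c4]
  ring

lemma Nop_eq : Nop = Yop 1 1 := by
  funext v x; simp [Nop, Yop]

end Hlp2

open Hlp Hlp2

/-- for all `r, s > 0`,
`(min{r,s})² ⟨u,(p²+q²)² u⟩ − 2(rs − (min{r,s})²)‖u‖² ≤ ⟨u,(rp²+sq²)² u⟩`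
and `⟨u,(rp²+sq²)² u⟩ ≤ (max{r,s})² ⟨u,(p²+q²)² u⟩ + 2((max{r,s})² − rs)‖u‖²`. -/
theorem rp2_sq2_squared_bounds (r s : ℝ) (hr : 0 < r) (hs : 0 < s)
    (u : ℝ → ℂ) (hu : IsTest u) :
    (((min r s)^2 : ℝ) : ℂ) * ip u (Nop (Nop u))
        - 2 * ((r*s - (min r s)^2 : ℝ) : ℂ) * ip u u
      ≤ ip u (Yop r s (Yop r s u))
    ∧ ip u (Yop r s (Yop r s u))
      ≤ (((max r s)^2 : ℝ) : ℂ) * ip u (Nop (Nop u))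
        + 2 * (((max r s)^2 - r*s : ℝ) : ℂ) * ip u u := by
  obtain ⟨a, ha0, hA⟩ := ip_self_real (pOp (pOp u))
  obtain ⟨b, hb0, hB⟩ := ip_self_real (qOp (qOp u))
  obtain ⟨t, ht0, hT⟩ := ip_self_real (qOp (pOp u))
  obtain ⟨n, hn0, hN0⟩ := ip_self_real u
  set w : ℂ := ip u (qOp (pOp u)) with hw
  -- α and β
  have hα : ip u (pOp (pOp (pOp (pOp u)))) = ((a : ℝ) : ℂ) := by
    rw [← ip_p_symm hu (tp (tp (tp hu))), ← ip_p_symm (tp hu) (tp (tp hu)), hA]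
  have hβ : ip u (qOp (qOp (qOp (qOp u)))) = ((b : ℝ) : ℂ) := by
    rw [← ip_q_symm, ← ip_q_symm, hB]
  -- g = ip (pOp u) (qOp u)
  have hg : ip (pOp u) (qOp u) = w + (-Complex.I) * ((n : ℝ) : ℂ) := by
    rw [ip_p_symm hu (tq hu), pOp_q hu,
      ip_comb hu (tcont (tq (tp hu))) (tcont hu), hN0, hw]
    ring
  have hcg : (starRingEnd ℂ) (ip (pOp u) (qOp u)) = w := by
    rw [hw, show ip u (qOp (pOp u)) = ip (qOp u) (pOp u) from ip_q_symm.symm]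
    exact (ip_conj (qOp u) (pOp u)).symm
  -- D = ip (pOp u) (pOp (qOp (qOp u)))
  have hD : ip (pOp u) (pOp (qOp (qOp u)))
      = ((t : ℝ) : ℂ) + (-2*Complex.I) * ip (pOp u) (qOp u) := by
    rw [pOp_qq hu, ip_comb (tp hu) (tcont (tq (tq (tp hu)))) (tcont (tq hu)),
      ← ip_q_symm, hT]
    ring
  have hg1 : ip u (pOp (pOp (qOp (qOp u))))
      = ((t : ℝ) : ℂ) + (-2*Complex.I) * (w + (-Complex.I) * ((n : ℝ) : ℂ)) := by
    rw [← ip_p_symm hu (tp (tq (tq hu))), hD, hg]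
  have hg2 : ip u (qOp (qOp (pOp (pOp u))))
      = ((t : ℝ) : ℂ) + (2*Complex.I) * w := by
    rw [← ip_q_symm, ← ip_q_symm, ip_conj, ip_p_symm (tp hu) (tq (tq hu)), hD]
    rw [map_add, map_mul, map_mul, hcg, Complex.conj_ofReal]
    rw [show (starRingEnd ℂ) (-2 : ℂ) = -2 by simp [Complex.ext_iff]]
    simp [Complex.conj_I]
    try ring
  -- main reductions
  have keyY : ip u (Yop r s (Yop r s u))
      = ((r*r*a + s*s*b + r*s*(2*t - 2*n) : ℝ) : ℂ) := by
    rw [ip_Y2 hu, hα, hβ, hg1, hg2]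
    push_cast
    linear_combination (2*(r:ℂ)*(s:ℂ)*(n:ℂ)) * Complex.I_mul_I
  have keyN : ip u (Nop (Nop u))
      = ((a + b + (2*t - 2*n) : ℝ) : ℂ) := by
    rw [Nop_eq, ip_Y2 hu, hα, hβ, hg1, hg2]
    push_cast
    linear_combination (2*(n:ℂ)) * Complex.I_mul_I
  rw [keyY, keyN, hN0]
  constructor
  · have hre : (min r s)^2 * (a + b + (2*t - 2*n)) - 2 * ((r*s - (min r s)^2)) * n
        ≤ r*r*a + s*s*b + r*s*(2*t - 2*n) := by
      rcases le_total r s with h | h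
      · rw [min_eq_left h]
        nlinarith [mul_nonneg (sub_nonneg.2 (mul_self_le_mul_self hr.le h)) hb0,
          mul_nonneg (mul_nonneg hr.le (sub_nonneg.2 h)) ht0, ha0, hn0]
      · rw [min_eq_right h]
        nlinarith [mul_nonneg (sub_nonneg.2 (mul_self_le_mul_self hs.le h)) ha0,
          mul_nonneg (mul_nonneg hs.le (sub_nonneg.2 h)) ht0, hb0, hn0]
    calc (((min r s)^2 : ℝ) : ℂ) * ((a + b + (2*t - 2*n) : ℝ) : ℂ)
          - 2 * ((r*s - (min r s)^2 : ℝ) : ℂ) * ((n:ℝ):ℂ)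
        = (((min r s)^2 * (a + b + (2*t - 2*n)) - 2 * ((r*s - (min r s)^2)) * n : ℝ) : ℂ) := by
          push_cast; ring
      _ ≤ _ := Complex.real_le_real.mpr hre
  · have hre : r*r*a + s*s*b + r*s*(2*t - 2*n)
        ≤ (max r s)^2 * (a + b + (2*t - 2*n)) + 2 * ((max r s)^2 - r*s) * n := by
      rcases le_total r s with h | h
      · rw [max_eq_right h]
        nlinarith [mul_nonneg (sub_nonneg.2 (mul_self_le_mul_self hr.le h)) ha0,
          mul_nonneg (mul_nonneg hs.le (sub_nonneg.2 h)) ht0, hb0, hn0]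
      · rw [max_eq_left h]
        nlinarith [mul_nonneg (sub_nonneg.2 (mul_self_le_mul_self hs.le h)) hb0,
          mul_nonneg (mul_nonneg hr.le (sub_nonneg.2 h)) ht0, ha0, hn0]
    calc ((r*r*a + s*s*b + r*s*(2*t - 2*n) : ℝ) : ℂ)
        ≤ (((max r s)^2 * (a + b + (2*t - 2*n)) + 2 * ((max r s)^2 - r*s) * n : ℝ) : ℂ) :=
          Complex.real_le_real.mpr hre
      _ = _ := by push_cast; ring
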